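/- Let m be a natural number, and let A and B be disjoint finite sets of natural numbers with A ∪ B = {0, 1, ..., 2m}, |A| = m + 1 and |B| = m. Assume condition (*) holds: i + j ≠ 2m for any two distinct elements i, j of A, and i + j ≠ 2m for any two distinct elements i, j of B. Then the number of even elements of B is congruent to m(m+1)/2 modulo 2. -/

import Mathlib

open Finset

private lemma aux_mod (m : ℕ) : (m + 1) / 2 ≡ m * (m + 1) / 2 [MOD 2] := by
  obtain ⟨q, r, hr, rfl⟩ : ∃ q r, r < 4 ∧ m = 4 * q + r := ⟨m / 4, m % 4, by omega, by omega⟩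
  unfold Nat.ModEq
  interval_cases r
  · have h : (4 * q + 0) * (4 * q + 0 + 1) = 16 * (q * q) + 4 * q := by ring
    omega
  · have h : (4 * q + 1) * (4 * q + 1 + 1) = 16 * (q * q) + 12 * q + 2 := by ring
    omega
  · have h : (4 * q + 2) * (4 * q + 2 + 1) = 16 * (q * q) + 20 * q + 6 := by ring
    omega
  · have h : (4 * q + 3) * (4 * q + 3 + 1) = 16 * (q * q) + 28 * q + 12 := by ring
    omega

private lemma even_count (m : ℕ) : ((range m).filter (fun b => Even b)).card = (m + 1) / 2 := by
  induction m with
  | zero => simp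
  | succ n ih =>
    rw [range_add_one, filter_insert]
    rcases Nat.even_or_odd n with h | h
    · rw [if_pos h, card_insert_of_notMem (by simp), ih]
      obtain ⟨k, rfl⟩ := h
      omega
    · rw [if_neg (by simpa [Nat.not_even_iff_odd] using h), ih]
      obtain ⟨k, rfl⟩ := h
      omega

/-- Lemma 2.7 of the paper: if `A` and `B` are disjoint sets of natural numbers
with `A ∪ B = {0, 1, ..., 2m}`, `|A| = m + 1`, `|B| = m`, and no two distinct
elements of `A` (resp. of `B`) sum to `2m`, then the number of even elements of
`B` is congruent to `m(m+1)/2` modulo `2`. -/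
theorem stmt_0 (m : ℕ) (A B : Finset ℕ)
    (hdisj : Disjoint A B)
    (hunion : A ∪ B = Finset.range (2 * m + 1))
    (hA : A.card = m + 1) (hB : B.card = m)
    (hstarA : ∀ i ∈ A, ∀ j ∈ A, i ≠ j → i + j ≠ 2 * m)
    (hstarB : ∀ i ∈ B, ∀ j ∈ B, i ≠ j → i + j ≠ 2 * m) :
    (B.filter (fun b => Even b)).card ≡ m * (m + 1) / 2 [MOD 2] := by
  have key : ∀ i < m, (i ∈ B ↔ 2 * m - i ∉ B) := by
    intro i hi
    have h1 : i ∈ A ∪ B := by rw [hunion]; simp; omega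
    have h2 : 2 * m - i ∈ A ∪ B := by rw [hunion]; simp
    have hne : i ≠ 2 * m - i := by omega
    have hsum : i + (2 * m - i) = 2 * m := by omega
    simp only [mem_union] at h1 h2
    constructor
    · intro hiB h2B
      exact hstarB i hiB _ h2B hne hsum
    · intro h2nB
      rcases h1 with h1A | h1B
      · rcases h2 with h2A | h2B
        · exact absurd hsum (hstarA i h1A _ h2A hne)
        · exact absurd h2B h2nB
      · exact h1B
  set g : ℕ → ℕ := fun i => if i ∈ B then i else 2 * m - i with hg
  have hgmem : ∀ i < m, g i ∈ B := by
    intro i hi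
    by_cases h : i ∈ B
    · simp [hg, h]
    · have h2 : 2 * m - i ∈ B := by
        by_contra h2
        exact h ((key i hi).mpr h2)
      simpa [hg, h]
  have hginj : Set.InjOn g (range m) := by
    intro i hi j hj hij
    simp only [coe_range, Set.mem_Iio] at hi hj
    by_cases h1 : i ∈ B <;> by_cases h2 : j ∈ B <;>
      simp only [hg, h1, h2, if_pos, if_neg, if_true, if_false] at hij <;> omega
  have himage : (range m).image g = B := by
    apply eq_of_subset_of_card_le
    · intro x hx
      simp only [mem_image, mem_range] at hx
      obtain ⟨i, hi, rfl⟩ := hx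
      exact hgmem i hi
    · rw [hB, Finset.card_image_of_injOn hginj, card_range]
  have hfilter : B.filter (fun b => Even b) = ((range m).filter fun i => Even (g i)).image g := by
    rw [← himage, filter_image]
  have hcongr : (range m).filter (fun i => Even (g i)) = (range m).filter (fun i => Even i) := by
    apply filter_congr
    intro i hi
    simp only [mem_range] at hi
    by_cases h : i ∈ B
    · simp [hg, h]
    · simp [hg, h, Nat.even_sub (by omega : i ≤ 2 * m), Nat.even_mul]
  rw [hfilter, Finset.card_image_of_injOn (hginj.mono (by exact_mod_cast filter_subset _ _)),
    hcongr, even_count]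
  exact aux_mod m
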